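/- Let Ω(r) = ∑_{n≥0} (1/(n+1))·C(2n,n)²·r^{n+1} as a formal power series over ℚ. Then Ω satisfies the linear differential equation 4·Ω(r) + r·(16r − 1)·Ω''(r) = 0. -/

import Mathlib

open PowerSeries

/-- `Ω(r) = ∑_{n≥0} (1/(n+1))·C(2n,n)²·r^{n+1}`. -/
noncomputable def Omega : PowerSeries ℚ :=
  PowerSeries.mk fun m => if m = 0 then 0 else
    (1 / (m : ℚ)) * ((2 * (m - 1)).choose (m - 1) : ℚ) ^ 2

theorem omega_ode : 4 * Omega
    + PowerSeries.X * (16 * PowerSeries.X - 1) * (d⁄dX ℚ) ((d⁄dX ℚ) Omega) = 0 := by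
  set g := (d⁄dX ℚ) ((d⁄dX ℚ) Omega) with hg
  have h : 4 * Omega + PowerSeries.X * (16 * PowerSeries.X - 1) * g =
      ((C (4:ℚ)) * Omega + (C (16:ℚ)) * (X * (X * g))) - X * g := by
    rw [map_ofNat, map_ofNat]; ring
  rw [h]
  ext n
  rw [map_sub, map_add, coeff_C_mul, coeff_C_mul, map_zero]
  have hcoeff : ∀ m : ℕ, coeff m g = coeff (m + 2) Omega * (m + 2) * (m + 1) := by
    intro m
    rw [hg, coeff_derivative, coeff_derivative]
    push_cast
    ring
  match n with
  | 0 =>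
    simp [Omega, coeff_mk]
  | 1 =>
    rw [coeff_succ_X_mul, coeff_succ_X_mul, coeff_zero_X_mul, hcoeff]
    simp [Omega, coeff_mk]
    norm_num
  | (n + 2) =>
    rw [coeff_succ_X_mul, coeff_succ_X_mul, coeff_succ_X_mul, hcoeff, hcoeff]
    have e1 : coeff (n + 2) Omega
        = (1 / ((n : ℚ) + 2)) * ((Nat.centralBinom (n + 1) : ℚ)) ^ 2 := by
      simp only [Omega, coeff_mk]
      rw [if_neg (by omega)]
      have : n + 2 - 1 = n + 1 := by omega
      rw [this, Nat.centralBinom]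
      push_cast
      ring
    have e3 : coeff (n + 3) Omega
        = (1 / ((n : ℚ) + 3)) * ((Nat.centralBinom (n + 2) : ℚ)) ^ 2 := by
      simp only [Omega, coeff_mk]
      rw [if_neg (by omega)]
      have : n + 3 - 1 = n + 2 := by omega
      rw [this, Nat.centralBinom]
      push_cast
      ring
    have hrec : ((n : ℚ) + 2) * (Nat.centralBinom (n + 2) : ℚ)
        = 2 * (2 * (n : ℚ) + 3) * (Nat.centralBinom (n + 1) : ℚ) := by
      have := Nat.succ_mul_centralBinom_succ (n + 1)
      have h2 : ((n + 2) * Nat.centralBinom (n + 2) : ℚ)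
          = ((2 * (2 * (n + 1) + 1) * Nat.centralBinom (n + 1) : ℕ) : ℚ) := by
        exact_mod_cast congrArg (Nat.cast : ℕ → ℚ) this
      push_cast at h2
      linarith
    have e3' : coeff (n + 1 + 2) Omega
        = (1 / ((n : ℚ) + 3)) * ((Nat.centralBinom (n + 2) : ℚ)) ^ 2 := by
      rw [show n + 1 + 2 = n + 3 from rfl]; exact e3
    rw [e1, e3']
    push_cast
    have h4 : ((n : ℚ) + 2) ≠ 0 := by positivity
    have h6 : ((n : ℚ) + 3) ≠ 0 := by positivity
    field_simp
    linear_combination (-((n:ℚ)+3)) * (((n:ℚ)+2) * (Nat.centralBinom (n + 2) : ℚ)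
      + 2 * (2*(n:ℚ)+3) * (Nat.centralBinom (n + 1) : ℚ)) * hrec
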